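/- The number of bargraphs with exactly j H steps, exactly k U steps, and no occurrence of the factor DH equals the number of words over {U,H} of length j+k with exactly j letters H that begin with U and end with H; equivalently, the generating function of bargraphs avoiding DH, with x marking H steps and y marking U steps, is xy/(1−x−y). -/

import Mathlib

/-- Steps of bargraphs / Motzkin paths. -/
inductive Step where
  | U : Step
  | H : Step
  | D : Step
deriving DecidableEq

/-- Vertical displacement of a step. -/
def Step.val : Step → ℤ
  | .U => 1
  | .H => 0
  | .D => -1

/-- Mirror of a step (swap U and D). -/
def Step.mirror : Step → Step
  | .U => .D
  | .H => .H
  | .D => .U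

/-- Final height of a word. -/
def hgt (w : List Step) : ℤ := (w.map Step.val).sum

/-- A Motzkin path prefix: never goes below the x-axis. -/
def IsMotzkinPrefix (w : List Step) : Prop := ∀ p : List Step, p <+: w → 0 ≤ hgt p

/-- A Motzkin path: never below the x-axis, ends at height 0. -/
def IsMotzkin (w : List Step) : Prop := IsMotzkinPrefix w ∧ hgt w = 0

/-- No peak `UD` and no valley `DU`. -/
def Cornerless (w : List Step) : Prop :=
  ¬ [Step.U, Step.D] <:+: w ∧ ¬ [Step.D, Step.U] <:+: w

/-- A bargraph: starts at the origin, ends on the x-axis, stays strictly above the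
x-axis except at the endpoints, and has no factor `UD` or `DU`. -/
def IsBargraph (w : List Step) : Prop :=
  2 ≤ w.length ∧ hgt w = 0 ∧
    (∀ p : List Step, p <+: w → p ≠ [] → p ≠ w → 0 < hgt p) ∧ Cornerless w

/-- Semiperimeter: number of `U` steps plus number of `H` steps. -/
def semi (w : List Step) : ℕ := w.count Step.U + w.count Step.H

/-- Length of the initial run of `U` steps. -/
def leadU : List Step → ℕ
  | Step.U :: rest => leadU rest + 1
  | _ => 0

/-- Length of the initial run of `H` steps. -/
def leadH : List Step → ℕ
  | Step.H :: rest => leadH rest + 1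
  | _ => 0

/-- Length of the initial run of `D` steps. -/
def leadD : List Step → ℕ
  | Step.D :: rest => leadD rest + 1
  | _ => 0

/-- Length of the first maximal run of `D` steps (0 if none). -/
def firstDescLen : List Step → ℕ
  | [] => 0
  | Step.D :: rest => leadD rest + 1
  | _ :: rest => firstDescLen rest

/-- Number of occurrences of the two-letter factor `a b`. -/
def cnt2 (a b : Step) : List Step → ℕ
  | x :: y :: rest => (if x = a ∧ y = b then 1 else 0) + cnt2 a b (y :: rest)
  | _ => 0

/-- Heights of the columns (`H` steps), starting from a given height. -/
def colHeights : ℤ → List Step → List ℤ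
  | _, [] => []
  | h, Step.U :: rest => colHeights (h + 1) rest
  | h, Step.H :: rest => h :: colHeights h rest
  | h, Step.D :: rest => colHeights (h - 1) rest

/-- Width of the leftmost maximal horizontal segment (0 if none). -/
def lhsW : List Step → ℕ
  | [] => 0
  | Step.H :: rest => leadH rest + 1
  | _ :: rest => lhsW rest

/-- Delete `h` steps at the start of the leftmost horizontal segment. -/
def stripLeadH (h : ℕ) : List Step → List Step
  | [] => []
  | Step.H :: rest => List.drop h (Step.H :: rest)
  | s :: rest => s :: stripLeadH h rest

/-- Number of initial columns of height 1: largest `j` such that the word begins `U H^j`. -/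
def iuc : List Step → ℕ
  | Step.U :: rest => leadH rest
  | _ => 0

/-- Number of maximal horizontal segments. -/
def hsCount : List Step → ℕ
  | [] => 0
  | [Step.H] => 1
  | [_] => 0
  | a :: b :: rest => (if a = Step.H ∧ b ≠ Step.H then 1 else 0) + hsCount (b :: rest)

/-- Mirror image: reverse the word and swap `U` with `D`. -/
def mir (w : List Step) : List Step := (w.reverse).map Step.mirror

/-- Shape of strictly alternating bargraphs:
`U^{i₁} H D^{k₁} H U^{i₂} H D^{k₂} H ⋯ U^{iₘ} H D^{kₘ}` with all `iᵣ, kᵣ ≥ 1`. -/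
inductive SAShape : List Step → Prop where
  | base (i k : ℕ) : 1 ≤ i → 1 ≤ k →
      SAShape (List.replicate i Step.U ++ [Step.H] ++ List.replicate k Step.D)
  | cons (i k : ℕ) (w : List Step) : 1 ≤ i → 1 ≤ k → SAShape w →
      SAShape (List.replicate i Step.U ++ [Step.H] ++ List.replicate k Step.D ++ [Step.H] ++ w)

/-- A strictly alternating bargraph. -/
def IsStrictAlt (w : List Step) : Prop := IsBargraph w ∧ SAShape w

/-- A secondary structure on `{0, …, m-1}`: all consecutive edges are present, every
vertex has at most one non-consecutive neighbour, and there are no crossing edges. -/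
def IsSecondaryStructure {m : ℕ} (G : SimpleGraph (Fin m)) : Prop :=
  (∀ i j : Fin m, (i : ℕ) + 1 = (j : ℕ) → G.Adj i j) ∧
  (∀ i j k : Fin m, G.Adj i j → G.Adj i k →
      (i : ℕ) + 1 ≠ (j : ℕ) → (j : ℕ) + 1 ≠ (i : ℕ) →
      (i : ℕ) + 1 ≠ (k : ℕ) → (k : ℕ) + 1 ≠ (i : ℕ) → j = k) ∧
  ¬ ∃ i j k l : Fin m, (i : ℕ) < (j : ℕ) ∧ (j : ℕ) < (k : ℕ) ∧ (k : ℕ) < (l : ℕ) ∧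
      G.Adj i k ∧ G.Adj j l

/-- Generating function of bargraphs: `x` (variable 0) marks `H` steps,
`y` (variable 1) marks `U` steps. -/
noncomputable def BG : MvPowerSeries (Fin 2) ℚ :=
  fun d => (Nat.card {w : List Step //
    IsBargraph w ∧ w.count Step.H = d 0 ∧ w.count Step.U = d 1} : ℚ)

/-- Generating function of cornerless Motzkin paths. -/
noncomputable def MG : MvPowerSeries (Fin 2) ℚ :=
  fun d => (Nat.card {w : List Step //
    IsMotzkin w ∧ Cornerless w ∧ w.count Step.H = d 0 ∧ w.count Step.U = d 1} : ℚ)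

/-- Generating function of bargraphs avoiding the factor `DH`. -/
noncomputable def BDH : MvPowerSeries (Fin 2) ℚ :=
  fun d => (Nat.card {w : List Step //
    IsBargraph w ∧ ¬ [Step.D, Step.H] <:+: w ∧
      w.count Step.H = d 0 ∧ w.count Step.U = d 1} : ℚ)

/-- Generating function of bargraphs avoiding the factors `DH` and `HH`. -/
noncomputable def BDHHH : MvPowerSeries (Fin 2) ℚ :=
  fun d => (Nat.card {w : List Step //
    IsBargraph w ∧ ¬ [Step.D, Step.H] <:+: w ∧ ¬ [Step.H, Step.H] <:+: w ∧
      w.count Step.H = d 0 ∧ w.count Step.U = d 1} : ℚ)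

/-- Generating function of cornerless Motzkin path prefixes ending at height `h`. -/
noncomputable def Pgf (h : ℕ) : MvPowerSeries (Fin 2) ℚ :=
  fun d => (Nat.card {w : List Step //
    IsMotzkinPrefix w ∧ Cornerless w ∧ hgt w = (h : ℤ) ∧
      w.count Step.H = d 0 ∧ w.count Step.U = d 1} : ℚ)

/-- Decomposition `G = U^a G₁ H G₂ D^a` of a strictly alternating bargraph. -/
def SADecomp (t : ℕ × List Step × List Step) (G : List Step) : Prop :=
  1 ≤ t.1 ∧ IsStrictAlt t.2.1 ∧ IsStrictAlt (Step.U :: (t.2.2 ++ [Step.D])) ∧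
    G = List.replicate t.1 Step.U ++ t.2.1 ++ [Step.H] ++ t.2.2 ++
      List.replicate t.1 Step.D
section Aux

open List

instance : Fintype Step :=
  ⟨{Step.U, Step.H, Step.D}, by intro x; cases x <;> simp⟩

lemma hgt_nil : hgt [] = 0 := rfl

lemma hgt_cons (s : Step) (w : List Step) : hgt (s :: w) = s.val + hgt w := by
  simp [hgt]

lemma hgt_append (a b : List Step) : hgt (a ++ b) = hgt a + hgt b := by
  simp [hgt]

lemma hgt_eq_counts (w : List Step) :
    hgt w = (w.count Step.U : ℤ) - (w.count Step.D : ℤ) := by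
  induction w with
  | nil => simp [hgt]
  | cons s t ih =>
    rw [hgt_cons, ih]
    cases s <;> simp [Step.val, List.count_cons] <;> omega

lemma hgt_replicate_D (m : ℕ) : hgt (List.replicate m Step.D) = -(m : ℤ) := by
  induction m with
  | zero => simp [hgt]
  | succ n ih => rw [List.replicate_succ, hgt_cons, ih]; simp [Step.val]

lemma count_UH_length (w : List Step) (h : ∀ s ∈ w, s = Step.U ∨ s = Step.H) :
    w.count Step.U + w.count Step.H = w.length := by
  induction w with
  | nil => simp
  | cons s t ih =>
    have hs := h s (by simp)
    have ht := ih (fun x hx => h x (by simp [hx]))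
    rcases hs with rfl | rfl <;> simp [List.count_cons] <;> omega

lemma hgt_UH (w : List Step) (h : ∀ s ∈ w, s = Step.U ∨ s = Step.H) :
    hgt w = (w.count Step.U : ℤ) := by
  rw [hgt_eq_counts]
  have : w.count Step.D = 0 := by
    rw [List.count_eq_zero]
    intro hD
    rcases h _ hD with h' | h' <;> simp at h'
  simp [this]

lemma not_infix_pair_iff (a b : Step) (w : List Step) :
    (¬ [a, b] <:+: w) ↔ List.IsChain (fun x y => ¬(x = a ∧ y = b)) w := by
  induction w with
  | nil => simp
  | cons x t ih =>
    rw [List.infix_cons_iff, not_or, List.isChain_cons, ← ih]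
    constructor
    · rintro ⟨h1, h2⟩
      refine ⟨?_, h2⟩
      intro y hy ⟨rfl, rfl⟩
      cases t with
      | nil => simp at hy
      | cons z t' =>
        simp at hy
        subst hy
        exact h1 (by rw [List.cons_prefix_cons, List.cons_prefix_cons]; simp)
    · rintro ⟨h1, h2⟩
      refine ⟨?_, h2⟩
      intro hp
      cases t with
      | nil =>
        rcases hp with ⟨r, hr⟩
        simp [List.cons_eq_cons] at hr
      | cons z t' =>
        rw [List.cons_prefix_cons, List.cons_prefix_cons] at hp
        exact h1 z (by simp) ⟨hp.1.symm, hp.2.1.symm⟩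

lemma chain'_of_pairs {R : Step → Step → Prop} {l : List Step}
    (h : ∀ x ∈ l, ∀ y ∈ l, R x y) : l.IsChain R := by
  induction l with
  | nil => simp
  | cons x t ih =>
    rw [List.isChain_cons]
    refine ⟨fun y hy => h x (by simp) y (by simp [List.mem_of_mem_head? hy]), ?_⟩
    exact ih (fun x hx y hy => h x (by simp [hx]) y (by simp [hy]))

end Aux
section Aux2

def uhpred : Step → Bool := fun s => s != Step.D

lemma uhpred_false {y : Step} (h : uhpred y = false) : y = Step.D := by
  cases y <;> simp [uhpred] at h ⊢

lemma head?_dropWhile_false (p : Step → Bool) :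
    ∀ (l : List Step) (a : Step), (l.dropWhile p).head? = some a → p a = false := by
  intro l
  induction l with
  | nil => simp
  | cons s t ih =>
    intro a h
    rw [List.dropWhile_cons] at h
    by_cases hs : p s = true
    · rw [if_pos hs] at h; exact ih a h
    · rw [if_neg hs] at h
      simp at h
      subst h
      simpa using hs

lemma all_eq_D : ∀ (w : List Step), ¬ [Step.D, Step.U] <:+: w → ¬ [Step.D, Step.H] <:+: w →
    w.head? = some Step.D → ∀ x ∈ w, x = Step.D := by
  intro w
  induction w with
  | nil => simp
  | cons s t ih =>
    intro h1 h2 hh x hx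
    have hs : s = Step.D := by simpa using hh
    subst hs
    rcases List.mem_cons.mp hx with rfl | hx'
    · rfl
    · cases t with
      | nil => simp at hx'
      | cons b t' =>
        have hb : b = Step.D := by
          cases b
          · exact absurd ⟨[], t', by simp⟩ h1
          · exact absurd ⟨[], t', by simp⟩ h2
          · rfl
        exact ih (fun h => h1 (List.infix_cons_iff.mpr (Or.inr h)))
          (fun h => h2 (List.infix_cons_iff.mpr (Or.inr h))) (by simp [hb]) x hx'

lemma isBargraph_word (p : List Step) (hall : ∀ s ∈ p, s = Step.U ∨ s = Step.H)
    (hh : p.head? = some Step.U) (hl : p.getLast? = some Step.H) :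
    IsBargraph (p ++ List.replicate (p.count Step.U) Step.D) ∧
      ¬ [Step.D, Step.H] <:+: (p ++ List.replicate (p.count Step.U) Step.D) := by
  obtain ⟨p₁, rfl⟩ : ∃ t, p = Step.U :: t := by
    cases p with
    | nil => simp at hh
    | cons c t =>
      simp at hh
      exact ⟨t, by rw [hh]⟩
  set p : List Step := Step.U :: p₁ with hp
  set k := p.count Step.U with hk
  have hp1 : p₁ ≠ [] := by
    rintro rfl
    simp [hp] at hl
  have hk1 : 1 ≤ k := by
    rw [hk]
    refine List.count_pos_iff.mpr ?_
    simp [hp]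
  have hlenp : 2 ≤ p.length := by
    cases p₁ with
    | nil => exact absurd rfl hp1
    | cons b t' => simp [hp]
  have hfac : ∀ a b : Step, ((a = Step.U ∧ b = Step.D) ∨ (a = Step.D ∧ b ≠ Step.D)) →
      ¬ [a, b] <:+: (p ++ List.replicate k Step.D) := by
    intro a b hab
    rw [not_infix_pair_iff, List.isChain_append]
    refine ⟨chain'_of_pairs (fun x hx y hy hxy => ?_),
      chain'_of_pairs (fun x hx y hy hxy => ?_), fun x hx y hy hxy => ?_⟩
    · obtain ⟨rfl, rfl⟩ := hxy
      rcases hab with ⟨_, rfl⟩ | ⟨rfl, _⟩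
      · rcases hall _ hy with h | h <;> exact Step.noConfusion h
      · rcases hall _ hx with h | h <;> exact Step.noConfusion h
    · obtain ⟨rfl, rfl⟩ := hxy
      have hx' := List.eq_of_mem_replicate hx
      have hy' := List.eq_of_mem_replicate hy
      rcases hab with ⟨rfl, _⟩ | ⟨_, hb⟩
      · exact Step.noConfusion hx'
      · exact hb hy'
    · have hx' : x = Step.H := by
        rw [hl] at hx
        simpa [eq_comm] using hx
      obtain ⟨rfl, rfl⟩ := hxy
      rcases hab with ⟨hA, _⟩ | ⟨hA, _⟩ <;> rw [hx'] at hA <;> exact Step.noConfusion hA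
  have hpos : ∀ q, q <+: (p ++ List.replicate k Step.D) → q ≠ [] →
      q ≠ p ++ List.replicate k Step.D → 0 < hgt q := by
    intro q hq hne hnw
    by_cases hc : q.length ≤ p.length
    · have hqp : q <+: p := List.prefix_of_prefix_length_le hq (List.prefix_append _ _) hc
      have hallq : ∀ s ∈ q, s = Step.U ∨ s = Step.H := fun s hs => hall s (hqp.subset hs)
      rw [hgt_UH q hallq]
      have hUq : Step.U ∈ q := by
        cases q with
        | nil => exact absurd rfl hne
        | cons c q' =>
          have hc' := (List.cons_prefix_cons.mp hqp).1
          simp [hc']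
      exact_mod_cast List.count_pos_iff.mpr hUq
    · push_neg at hc
      have hqe : q = p ++ List.replicate (min (q.length - p.length) k) Step.D := by
        conv_lhs => rw [List.prefix_iff_eq_take.mp hq]
        rw [List.take_append, List.take_of_length_le hc.le, List.take_replicate]
      have hmin : min (q.length - p.length) k ≠ k := by
        intro h
        exact hnw (by rw [hqe, h])
      have hmlt : min (q.length - p.length) k < k := lt_of_le_of_ne (min_le_right _ _) hmin
      rw [hqe, hgt_append, hgt_UH _ hall, hgt_replicate_D, ← hk]
      have : ((min (q.length - p.length) k : ℕ) : ℤ) < (k : ℤ) := by exact_mod_cast hmlt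
      omega
  refine ⟨⟨?_, ?_, hpos, ?_, ?_⟩, ?_⟩
  · rw [List.length_append]
    omega
  · rw [hgt_append, hgt_UH _ hall, hgt_replicate_D, ← hk]
    ring
  · exact hfac Step.U Step.D (Or.inl ⟨rfl, rfl⟩)
  · exact hfac Step.D Step.U (Or.inr ⟨rfl, by simp⟩)
  · exact hfac Step.D Step.H (Or.inr ⟨rfl, by simp⟩)

end Aux2
section Aux3

lemma bargraph_structure (w : List Step) (hw : IsBargraph w)
    (hdh : ¬ [Step.D, Step.H] <:+: w) :
    (∀ s ∈ w.takeWhile uhpred, s = Step.U ∨ s = Step.H) ∧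
    (w.takeWhile uhpred).head? = some Step.U ∧
    (w.takeWhile uhpred).getLast? = some Step.H ∧
    (w.takeWhile uhpred).count Step.H = w.count Step.H ∧
    (w.takeWhile uhpred).count Step.U = w.count Step.U ∧
    w = w.takeWhile uhpred ++ List.replicate ((w.takeWhile uhpred).count Step.U) Step.D := by
  obtain ⟨hlen, hhgt, hpos, hUD, hDU⟩ := hw
  -- the first letter of w is U
  obtain ⟨c, t, rfl⟩ : ∃ c t, w = c :: t := by
    cases w with
    | nil => simp at hlen
    | cons c t => exact ⟨c, t, rfl⟩
  have ht : t ≠ [] := by rintro rfl; simp at hlen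
  have hcU : c = Step.U := by
    have h1 := hpos [c] ⟨t, rfl⟩ (by simp)
      (fun h => ht (by injection h with _ h2; exact h2.symm))
    cases c
    · rfl
    all_goals simp [hgt_cons, hgt, Step.val] at h1
  subst hcU
  set w : List Step := Step.U :: t with hwdef
  set p := w.takeWhile uhpred with hpdef
  set d := w.dropWhile uhpred with hddef
  have hall : ∀ s ∈ p, s = Step.U ∨ s = Step.H := by
    intro s hs
    have := List.mem_takeWhile_imp hs
    cases s <;> simp [uhpred] at this ⊢
  have hallD : ∀ x ∈ d, x = Step.D := by
    intro x hx
    cases hd : d with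
    | nil => rw [hd] at hx; simp at hx
    | cons y d' =>
      have hy : y = Step.D := by
        apply uhpred_false
        apply head?_dropWhile_false uhpred w
        rw [← hddef, hd]
        rfl
      apply all_eq_D d
      · exact fun h => hDU (h.trans (List.dropWhile_suffix uhpred).isInfix)
      · exact fun h => hdh (h.trans (List.dropWhile_suffix uhpred).isInfix)
      · rw [hd, hy]; rfl
      · exact hx
  have hpd : p ++ d = w := List.takeWhile_append_dropWhile
  have hdrep : d = List.replicate d.length Step.D := List.eq_replicate_iff.mpr ⟨rfl, hallD⟩
  have hcountD : w.count Step.D = d.length := by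
    rw [← hpd, List.count_append]
    have h0 : p.count Step.D = 0 := by
      rw [List.count_eq_zero]
      intro hD
      rcases hall _ hD with h | h <;> exact Step.noConfusion h
    rw [h0, zero_add]
    conv_lhs => rw [hdrep]
    exact List.count_replicate_self
  have hUD_eq : w.count Step.U = w.count Step.D := by
    have := hgt_eq_counts w
    rw [hhgt] at this
    omega
  have hcountU : p.count Step.U = w.count Step.U := by
    conv_rhs => rw [← hpd]
    rw [List.count_append]
    have : d.count Step.U = 0 := by
      rw [List.count_eq_zero]
      intro hU
      exact Step.noConfusion (hallD _ hU)
    omega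
  have hcountH : p.count Step.H = w.count Step.H := by
    conv_rhs => rw [← hpd]
    rw [List.count_append]
    have : d.count Step.H = 0 := by
      rw [List.count_eq_zero]
      intro hU
      exact Step.noConfusion (hallD _ hU)
    omega
  have hph : p.head? = some Step.U := by
    rw [hpdef, hwdef, List.takeWhile_cons_of_pos (by simp [uhpred])]
    rfl
  have hpne : p ≠ [] := by
    rintro hp0
    rw [hp0] at hph
    exact absurd hph (by simp)
  have hdne : d ≠ [] := by
    intro hd0
    have hU : Step.U ∈ w := by simp [hwdef]
    have : 0 < w.count Step.U := List.count_pos_iff.mpr hU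
    rw [hUD_eq, hcountD, hd0] at this
    simp at this
  obtain ⟨y, d', hd⟩ := List.exists_cons_of_ne_nil hdne
  have hyD : y = Step.D := hallD y (by rw [hd]; simp)
  have hgl : p.getLast? = some Step.H := by
    set x := p.getLast hpne with hx
    have hxmem : x ∈ p := List.getLast_mem hpne
    have hinf : [x, Step.D] <:+: w := by
      refine ⟨p.dropLast, d', ?_⟩
      rw [← hpd, hd, hyD]
      conv_rhs => rw [← List.dropLast_append_getLast hpne]
      simp
      exact hx
    have hxH : x = Step.H := by
      rcases hall x hxmem with h | h
      · exact absurd hinf (h ▸ hUD)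
      · exact h
    rw [List.getLast?_eq_getLast hpne, ← hx, hxH]
  refine ⟨hall, hph, hgl, hcountH, hcountU, ?_⟩
  rw [hcountU, hUD_eq, hcountD, ← hdrep, hpd]

end Aux3
section Aux4

def barWordEquiv (j k : ℕ) :
    {w : List Step // IsBargraph w ∧ ¬ [Step.D, Step.H] <:+: w ∧
        w.count Step.H = j ∧ w.count Step.U = k} ≃
    {w : List Step // (∀ s ∈ w, s = Step.U ∨ s = Step.H) ∧ w.length = j + k ∧
        w.count Step.H = j ∧ w.head? = some Step.U ∧ w.getLast? = some Step.H} where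
  toFun x := ⟨x.1.takeWhile uhpred, by
    obtain ⟨w, hb, hdh, hj, hk⟩ := x
    obtain ⟨h1, h2, h3, h4, h5, h6⟩ := bargraph_structure w hb hdh
    refine ⟨h1, ?_, by rw [h4, hj], h2, h3⟩
    rw [← count_UH_length _ h1, h4, h5, hj, hk, Nat.add_comm]⟩
  invFun x := ⟨x.1 ++ List.replicate (x.1.count Step.U) Step.D, by
    obtain ⟨p, hall, hlen, hj, hh, hl⟩ := x
    dsimp only
    obtain ⟨hb, hdh⟩ := isBargraph_word p hall hh hl
    have h0H : (List.replicate (p.count Step.U) Step.D).count Step.H = 0 := by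
      rw [List.count_eq_zero]
      intro hmem
      exact Step.noConfusion (List.eq_of_mem_replicate hmem)
    have h0U : (List.replicate (p.count Step.U) Step.D).count Step.U = 0 := by
      rw [List.count_eq_zero]
      intro hmem
      exact Step.noConfusion (List.eq_of_mem_replicate hmem)
    have hUHl := count_UH_length p hall
    refine ⟨hb, hdh, ?_, ?_⟩
    · rw [List.count_append]
      omega
    · rw [List.count_append]
      omega⟩
  left_inv x := by
    obtain ⟨w, hb, hdh, hj, hk⟩ := x
    exact Subtype.ext (bargraph_structure w hb hdh).2.2.2.2.2.symm
  right_inv x := by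
    obtain ⟨p, hall, hlen, hj, hh, hl⟩ := x
    apply Subtype.ext
    show (p ++ List.replicate (p.count Step.U) Step.D).takeWhile uhpred = p
    have hself : p.takeWhile uhpred = p := List.takeWhile_eq_self_iff.mpr (by
      intro a ha
      rcases hall a ha with rfl | rfl <;> simp [uhpred])
    rw [List.takeWhile_append, if_pos (by rw [hself])]
    have hrep : (List.replicate (p.count Step.U) Step.D).takeWhile uhpred = [] := by
      cases hc : p.count Step.U with
      | zero => rfl
      | succ n =>
        rw [List.replicate_succ, List.takeWhile_cons_of_neg (by simp [uhpred])]
    rw [hrep, List.append_nil]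

abbrev Wd (n a : ℕ) := {m : List Step // (∀ s ∈ m, s = Step.U ∨ s = Step.H) ∧
  m.length = n ∧ m.count Step.H = a}

instance WdFinite (n a : ℕ) : Finite (Wd n a) := by
  have h : {l : List Step | l.length = n}.Finite := List.finite_length_eq _ _
  haveI := h.to_subtype
  refine Finite.of_injective
    (fun x => (⟨x.1, x.2.2.1⟩ : {l : List Step | l.length = n})) ?_
  intro x y h
  simp only [Subtype.mk.injEq] at h
  exact Subtype.ext h

lemma card_Wd_zero (a : ℕ) : Nat.card (Wd 0 a) = if a = 0 then 1 else 0 := by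
  split_ifs with ha
  · subst ha
    have : Unique (Wd 0 0) :=
      { default := ⟨[], by simp⟩
        uniq := fun x => Subtype.ext (List.eq_nil_of_length_eq_zero x.2.2.1) }
    exact Nat.card_unique
  · have : IsEmpty (Wd 0 a) := ⟨fun x => by
      obtain ⟨m, h1, h2, h3⟩ := x
      rw [List.eq_nil_of_length_eq_zero h2] at h3
      simp at h3
      exact ha h3.symm⟩
    exact Nat.card_of_isEmpty

def eU (n a : ℕ) : {x : Wd (n+1) a // ¬ x.1.head? = some Step.H} ≃ Wd n a where
  toFun x := ⟨x.1.1.tail, by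
    obtain ⟨⟨m, hall, hlen, hc⟩, hhd⟩ := x
    obtain ⟨s, t, rfl⟩ : ∃ s t, m = s :: t := by
      cases m with
      | nil => simp at hlen
      | cons s t => exact ⟨s, t, rfl⟩
    have hsU : s = Step.U := by
      rcases hall s (by simp) with h | h
      · exact h
      · subst h; exact absurd rfl hhd
    subst hsU
    refine ⟨fun x hx => hall x (by simp [List.mem_cons]; right; exact hx), by simpa using hlen, ?_⟩
    simpa [List.count_cons] using hc⟩
  invFun y := ⟨⟨Step.U :: y.1, by
    obtain ⟨m, hall, hlen, hc⟩ := y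
    refine ⟨?_, by simp [hlen], by simpa [List.count_cons] using hc⟩
    intro s hs
    rcases List.mem_cons.mp hs with rfl | h
    · exact Or.inl rfl
    · exact hall s h⟩, by simp⟩
  left_inv x := by
    obtain ⟨⟨m, hall, hlen, hc⟩, hhd⟩ := x
    apply Subtype.ext
    apply Subtype.ext
    show Step.U :: m.tail = m
    obtain ⟨s, t, rfl⟩ : ∃ s t, m = s :: t := by
      cases m with
      | nil => simp at hlen
      | cons s t => exact ⟨s, t, rfl⟩
    have hsU : s = Step.U := by
      rcases hall s (by simp) with h | h
      · exact h
      · subst h; exact absurd rfl hhd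
    rw [hsU]
    rfl
  right_inv y := Subtype.ext rfl

def eH (n a : ℕ) : {x : Wd (n+1) (a+1) // x.1.head? = some Step.H} ≃ Wd n a where
  toFun x := ⟨x.1.1.tail, by
    obtain ⟨⟨m, hall, hlen, hc⟩, hhd⟩ := x
    obtain ⟨s, t, rfl⟩ : ∃ s t, m = s :: t := by
      cases m with
      | nil => simp at hlen
      | cons s t => exact ⟨s, t, rfl⟩
    have hsH : s = Step.H := by simpa using hhd
    subst hsH
    refine ⟨fun x hx => hall x (by simp [List.mem_cons]; right; exact hx), by simpa using hlen, ?_⟩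
    have := hc
    simp [List.count_cons] at this
    simpa using this⟩
  invFun y := ⟨⟨Step.H :: y.1, by
    obtain ⟨m, hall, hlen, hc⟩ := y
    refine ⟨?_, by simp [hlen], by simp [List.count_cons, hc]⟩
    intro s hs
    rcases List.mem_cons.mp hs with rfl | h
    · exact Or.inr rfl
    · exact hall s h⟩, by simp⟩
  left_inv x := by
    obtain ⟨⟨m, hall, hlen, hc⟩, hhd⟩ := x
    apply Subtype.ext
    apply Subtype.ext
    show Step.H :: m.tail = m
    obtain ⟨s, t, rfl⟩ : ∃ s t, m = s :: t := by
      cases m with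
      | nil => simp at hlen
      | cons s t => exact ⟨s, t, rfl⟩
    have hsH : s = Step.H := by simpa using hhd
    rw [hsH]
    rfl
  right_inv y := Subtype.ext rfl

lemma card_Wd (n : ℕ) : ∀ a, Nat.card (Wd n a) = n.choose a := by
  induction n with
  | zero =>
    intro a
    rw [card_Wd_zero]
    cases a <;> simp
  | succ n ih =>
    intro a
    classical
    have hsplit : Nat.card (Wd (n+1) a) =
        Nat.card {x : Wd (n+1) a // x.1.head? = some Step.H} +
          Nat.card {x : Wd (n+1) a // ¬ x.1.head? = some Step.H} := by
      rw [← Nat.card_sum]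
      exact (Nat.card_congr (Equiv.sumCompl _)).symm
    rw [hsplit, Nat.card_congr (eU n a), ih]
    cases a with
    | zero =>
      have : IsEmpty {x : Wd (n+1) 0 // x.1.head? = some Step.H} := ⟨fun x => by
        obtain ⟨⟨m, hall, hlen, hc⟩, hhd⟩ := x
        have hmem : Step.H ∈ m := List.mem_of_mem_head? (by rw [hhd]; rfl)
        have := List.count_pos_iff.mpr hmem
        omega⟩
      rw [Nat.card_of_isEmpty]
      simp
    | succ a =>
      rw [Nat.card_congr (eH n a), ih, Nat.choose_succ_succ]

end Aux4
section Aux5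

def wordMidEquiv (j k : ℕ) (hj : 1 ≤ j) (hk : 1 ≤ k) :
    {w : List Step // (∀ s ∈ w, s = Step.U ∨ s = Step.H) ∧ w.length = j + k ∧
        w.count Step.H = j ∧ w.head? = some Step.U ∧ w.getLast? = some Step.H}
      ≃ Wd (j + k - 2) (j - 1) where
  toFun x := ⟨x.1.tail.dropLast, by
    obtain ⟨w, hall, hlen, hc, hh, hl⟩ := x
    dsimp only
    obtain ⟨t, rfl⟩ : ∃ t, w = Step.U :: t := by
      cases w with
      | nil => simp at hh
      | cons c t =>
        simp at hh
        exact ⟨t, by rw [hh]⟩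
    have ht : t ≠ [] := by
      rintro rfl
      simp at hlen
      omega
    have hlt : t.getLast ht = Step.H := by
      rw [List.getLast?_eq_getLast (List.cons_ne_nil Step.U t)] at hl
      have := List.getLast_cons (a := Step.U) ht
      rw [this] at hl
      simpa using hl
    have htm : t.dropLast ++ [Step.H] = t := by
      conv_rhs => rw [← List.dropLast_append_getLast ht]
      rw [hlt]
    refine ⟨?_, ?_, ?_⟩
    · intro s hs
      exact hall s (by
        simp only [List.tail_cons] at hs
        exact List.mem_cons_of_mem _ ((List.dropLast_sublist t).subset hs))
    · simp only [List.tail_cons, List.length_dropLast]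
      simp at hlen
      omega
    · simp only [List.tail_cons]
      have h1 : t.count Step.H = j := by
        simpa [List.count_cons] using hc
      have h2 : t.count Step.H = t.dropLast.count Step.H + 1 := by
        conv_lhs => rw [← htm]
        simp [List.count_append]
      omega⟩
  invFun y := ⟨Step.U :: (y.1 ++ [Step.H]), by
    obtain ⟨m, hall, hlen, hc⟩ := y
    dsimp only
    refine ⟨?_, ?_, ?_, rfl, ?_⟩
    · intro s hs
      rcases List.mem_cons.mp hs with rfl | h
      · exact Or.inl rfl
      · rcases List.mem_append.mp h with h' | h'
        · exact hall s h'
        · simp at h'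
          exact Or.inr h'
    · simp [hlen]
      omega
    · simp [List.count_append, List.count_cons, hc]
      omega
    · rw [show Step.U :: (m ++ [Step.H]) = (Step.U :: m) ++ [Step.H] by simp]
      exact List.getLast?_concat⟩
  left_inv x := by
    obtain ⟨w, hall, hlen, hc, hh, hl⟩ := x
    apply Subtype.ext
    show Step.U :: (w.tail.dropLast ++ [Step.H]) = w
    obtain ⟨t, rfl⟩ : ∃ t, w = Step.U :: t := by
      cases w with
      | nil => simp at hh
      | cons c t =>
        simp at hh
        exact ⟨t, by rw [hh]⟩
    have ht : t ≠ [] := by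
      rintro rfl
      simp at hlen
      omega
    have hlt : t.getLast ht = Step.H := by
      rw [List.getLast?_eq_getLast (List.cons_ne_nil Step.U t)] at hl
      have := List.getLast_cons (a := Step.U) ht
      rw [this] at hl
      simpa using hl
    simp only [List.tail_cons]
    congr 1
    conv_rhs => rw [← List.dropLast_append_getLast ht]
    rw [hlt]
  right_inv y := by
    apply Subtype.ext
    show (Step.U :: (y.1 ++ [Step.H])).tail.dropLast = y.1
    simp only [List.tail_cons, List.dropLast_concat]

lemma card_word (j k : ℕ) :
    Nat.card {w : List Step // (∀ s ∈ w, s = Step.U ∨ s = Step.H) ∧ w.length = j + k ∧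
        w.count Step.H = j ∧ w.head? = some Step.U ∧ w.getLast? = some Step.H} =
      if 1 ≤ j ∧ 1 ≤ k then (j + k - 2).choose (j - 1) else 0 := by
  split_ifs with h
  · rw [Nat.card_congr (wordMidEquiv j k h.1 h.2), card_Wd]
  · have : IsEmpty {w : List Step // (∀ s ∈ w, s = Step.U ∨ s = Step.H) ∧ w.length = j + k ∧
        w.count Step.H = j ∧ w.head? = some Step.U ∧ w.getLast? = some Step.H} := ⟨fun x => by
      obtain ⟨w, hall, hlen, hc, hh, hl⟩ := x
      have hwne : w ≠ [] := by
        rintro rfl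
        simp at hh
      have hHmem : Step.H ∈ w := by
        rw [List.getLast?_eq_getLast hwne] at hl
        have := List.getLast_mem hwne
        rwa [← (by simpa using hl : w.getLast hwne = Step.H)]
      have hUmem : Step.U ∈ w := List.mem_of_mem_head? (by rw [hh]; rfl)
      have h1 : 0 < w.count Step.H := List.count_pos_iff.mpr hHmem
      have h2 : 0 < w.count Step.U := List.count_pos_iff.mpr hUmem
      have h3 := count_UH_length w hall
      omega⟩
    exact Nat.card_of_isEmpty

end Aux5
lemma choose_rec (j k : ℕ) :
    (if 1 ≤ j ∧ 1 ≤ k then ((j + k - 2).choose (j - 1) : ℚ) else 0)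
      - (if 1 ≤ j then
          (if 1 ≤ j - 1 ∧ 1 ≤ k then ((j - 1 + k - 2).choose (j - 1 - 1) : ℚ) else 0) else 0)
      - (if 1 ≤ k then
          (if 1 ≤ j ∧ 1 ≤ k - 1 then ((j + (k - 1) - 2).choose (j - 1) : ℚ) else 0) else 0)
      = if j = 1 ∧ k = 1 then 1 else 0 := by
  rcases j with _ | _ | j <;> rcases k with _ | _ | k <;>
    simp [Nat.succ_sub_one]
  have h1 : j + 1 + 1 + (k + 1 + 1) - 2 = (j + k + 1) + 1 := by omega
  have h2 : j + 1 + (k + 1 + 1) - 2 = j + k + 1 := by omega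
  have h3 : j + 1 + 1 + (k + 1) - 2 = j + k + 1 := by omega
  rw [h1, h2, h3, Nat.choose_succ_succ]
  push_cast
  ring

/-- bargraphs avoiding `DH` with `j` `H`s and `k` `U`s are
equinumerous with words over `{U,H}` of length `j + k` with `j` letters `H` that
begin with `U` and end with `H`; equivalently, their generating function is
`xy/(1 − x − y)`. -/
theorem nondecreasing_bargraphs :
    (∀ j k : ℕ,
      Nat.card {w : List Step // IsBargraph w ∧ ¬ [Step.D, Step.H] <:+: w ∧
          w.count Step.H = j ∧ w.count Step.U = k}
        = Nat.card {w : List Step // (∀ s ∈ w, s = Step.U ∨ s = Step.H) ∧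
            w.length = j + k ∧ w.count Step.H = j ∧
            w.head? = some Step.U ∧ w.getLast? = some Step.H}) ∧
    (1 - MvPowerSeries.X (0 : Fin 2) - MvPowerSeries.X (1 : Fin 2)) * BDH
      = MvPowerSeries.X (0 : Fin 2) * MvPowerSeries.X (1 : Fin 2) := by
  classical
  constructor
  · intro j k
    exact Nat.card_congr (barWordEquiv j k)
  · have hBDH : ∀ d : Fin 2 →₀ ℕ, (MvPowerSeries.coeff d) BDH =
        (if 1 ≤ d 0 ∧ 1 ≤ d 1 then ((d 0 + d 1 - 2).choose (d 0 - 1) : ℚ) else 0) := by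
      intro d
      rw [MvPowerSeries.coeff_apply]
      show ((Nat.card _ : ℕ) : ℚ) = _
      rw [Nat.card_congr (barWordEquiv (d 0) (d 1)), card_word]
      split_ifs with h <;> simp
    apply MvPowerSeries.ext
    intro d
    rw [sub_mul, sub_mul, one_mul, map_sub, map_sub]
    rw [MvPowerSeries.X_def (0 : Fin 2), MvPowerSeries.X_def (1 : Fin 2),
      MvPowerSeries.coeff_monomial_mul, MvPowerSeries.coeff_monomial_mul,
      MvPowerSeries.monomial_mul_monomial, MvPowerSeries.coeff_monomial]
    have e00 : ((d - Finsupp.single (0 : Fin 2) 1 : Fin 2 →₀ ℕ)) 0 = d 0 - 1 := by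
      rw [Finsupp.tsub_apply]
      simp
    have e01 : ((d - Finsupp.single (0 : Fin 2) 1 : Fin 2 →₀ ℕ)) 1 = d 1 := by
      rw [Finsupp.tsub_apply]
      simp [Finsupp.single_apply]
    have e10 : ((d - Finsupp.single (1 : Fin 2) 1 : Fin 2 →₀ ℕ)) 0 = d 0 := by
      rw [Finsupp.tsub_apply]
      simp [Finsupp.single_apply]
    have e11 : ((d - Finsupp.single (1 : Fin 2) 1 : Fin 2 →₀ ℕ)) 1 = d 1 - 1 := by
      rw [Finsupp.tsub_apply]
      simp
    have hle0 : (Finsupp.single (0 : Fin 2) 1 ≤ d) ↔ 1 ≤ d 0 := Finsupp.single_le_iff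
    have hle1 : (Finsupp.single (1 : Fin 2) 1 ≤ d) ↔ 1 ≤ d 1 := Finsupp.single_le_iff
    have heq : (d = Finsupp.single (0 : Fin 2) 1 + Finsupp.single (1 : Fin 2) 1)
        ↔ (d 0 = 1 ∧ d 1 = 1) := by
      constructor
      · rintro rfl
        simp [Finsupp.single_apply]
      · rintro ⟨h1, h2⟩
        ext i
        fin_cases i <;> simp [Finsupp.single_apply, h1, h2]
    rw [hBDH, hBDH, hBDH, e00, e01, e10, e11]
    simp only [hle0, hle1, heq, one_mul, mul_one]
    have := choose_rec (d 0) (d 1)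
    convert this using 2
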